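/- arXiv:2506.06746 — 3 statements merged into one kernel-verified Lean document; each statement's English description precedes it below -/
import Mathlib

section
/- For any real numbers θ₁ and θ₂ with θ₂ > 0, we have 0 ≤ |θ₁| - θ₁·tanh(θ₁/θ₂) ≤ ε*·θ₂, where ε* is the unique positive constant satisfying ε* = e^{-(ε*+1)}. -/
lemma key_aux (εs : ℝ) (hεs : εs = Real.exp (-(εs + 1))) (u : ℝ) :
    u ≤ εs * (Real.exp u + 1) := by
  have hεpos : 0 < εs := hεs ▸ Real.exp_pos _
  have h1 : εs * Real.exp (εs + 1) = 1 := by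
    nth_rewrite 1 [hεs]
    rw [← Real.exp_add, neg_add_cancel, Real.exp_zero]
  have h2 := Real.add_one_le_exp (u - (εs + 1))
  have h3 : Real.exp (u - (εs + 1)) * Real.exp (εs + 1) = Real.exp u := by
    rw [← Real.exp_add]; ring_nf
  nlinarith [Real.exp_pos (εs + 1), Real.exp_pos u,
    mul_le_mul_of_nonneg_right h2 (Real.exp_pos (εs + 1)).le,
    mul_pos hεpos (Real.exp_pos (εs + 1))]

theorem stmt_0 (θ₁ θ₂ : ℝ) (hθ₂ : θ₂ > 0) (εs : ℝ) (hεs_pos : εs > 0)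
    (hεs : εs = Real.exp (-(εs + 1))) :
    0 ≤ |θ₁| - θ₁ * Real.tanh (θ₁ / θ₂) ∧
      |θ₁| - θ₁ * Real.tanh (θ₁ / θ₂) ≤ εs * θ₂ := by
  have main : ∀ a : ℝ, 0 ≤ a →
      0 ≤ a - a * Real.tanh (a / θ₂) ∧ a - a * Real.tanh (a / θ₂) ≤ εs * θ₂ := by
    intro a ha
    set t := a / θ₂ with ht
    have hta : a = t * θ₂ := by rw [ht, div_mul_cancel₀ a hθ₂.ne']
    have htn : 0 ≤ t := div_nonneg ha hθ₂.le
    have hc : 0 < Real.cosh t := Real.cosh_pos t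
    have htanh := Real.tanh_eq_sinh_div_cosh t
    have hcosh := Real.cosh_eq t
    have hsinh := Real.sinh_eq t
    have hee : Real.exp t * Real.exp (-t) = 1 := by
      rw [← Real.exp_add]; simp
    have h2t : Real.exp (2 * t) = Real.exp t * Real.exp t := by
      rw [← Real.exp_add]; ring_nf
    have h4 : Real.exp (2 * t) * Real.exp (-t) = Real.exp t := by
      rw [← Real.exp_add]; ring_nf
    have hk := key_aux εs hεs (2 * t)
    constructor
    · have h5 : Real.tanh t ≤ 1 := by
        rw [htanh, div_le_one hc]
        nlinarith [Real.exp_pos (-t)]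
      nlinarith
    · have h5 : 2 * t * Real.exp (-t) ≤ εs * (Real.exp t + Real.exp (-t)) := by
        nlinarith [hk, h4, Real.exp_pos (-t), hεs_pos,
          mul_le_mul_of_nonneg_right hk (Real.exp_pos (-t)).le]
      rw [htanh]
      have heq : a - a * (Real.sinh t / Real.cosh t)
          = (a * Real.cosh t - a * Real.sinh t) / Real.cosh t := by
        field_simp
      rw [heq, div_le_iff₀ hc, hta, hcosh, hsinh]
      nlinarith [mul_le_mul_of_nonneg_right h5 hθ₂.le, hc, hθ₂]
  have habs : |θ₁| * Real.tanh (|θ₁| / θ₂) = θ₁ * Real.tanh (θ₁ / θ₂) := by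
    rcases le_or_gt 0 θ₁ with h | h
    · rw [abs_of_nonneg h]
    · rw [abs_of_neg h, neg_div, Real.tanh_neg]; ring
  have := main |θ₁| (abs_nonneg θ₁)
  rw [habs] at this
  exact this
end

section
/- Let w : [t_k, ∞) → ℝⁿ be continuously differentiable with ‖w'(t)‖ ≤ Ψ, Ψ > 0, and define e(t) = w(t) - u where u = w(t_k) is a fixed held control value. If t_{k+1} = inf{t > t_k : ‖e(t)‖ ≥ ζ‖u‖ + ξ} with ζ ∈ (0,1) and ξ > 0, then t_{k+1} - t_k ≥ ξ/Ψ > 0. -/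
theorem stmt_7 (n : ℕ) (w : ℝ → EuclideanSpace ℝ (Fin n)) (tk tk1 Ψ ζ ξ : ℝ)
    (hΨ : 0 < Ψ) (hζ : 0 < ζ) (hζ1 : ζ < 1) (hξ : 0 < ξ)
    (hw : ContDiff ℝ 1 w)
    (hbound : ∀ t, ‖deriv w t‖ ≤ Ψ)
    (htrig : IsLeast {t : ℝ | t > tk ∧ ‖w t - w tk‖ ≥ ζ * ‖w tk‖ + ξ} tk1) :
    tk1 - tk ≥ ξ / Ψ ∧ 0 < ξ / Ψ := by
  obtain ⟨⟨hgt, hnorm⟩, _⟩ := htrig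
  have hdiff : DifferentiableOn ℝ w (Set.univ : Set ℝ) :=
    (hw.differentiable one_ne_zero).differentiableOn
  have hlip : ‖w tk1 - w tk‖ ≤ Ψ * ‖tk1 - tk‖ := by
    have := (convex_univ : Convex ℝ (Set.univ : Set ℝ)).norm_image_sub_le_of_norm_deriv_le
      (fun x _ => hw.differentiable one_ne_zero x)
      (fun x _ => hbound x)
      (Set.mem_univ tk) (Set.mem_univ tk1)
    simpa [norm_sub_rev] using this
  have hξle : ξ ≤ ‖w tk1 - w tk‖ := by
    have : (0:ℝ) ≤ ζ * ‖w tk‖ := mul_nonneg hζ.le (norm_nonneg _)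
    linarith
  have habs : ‖tk1 - tk‖ = tk1 - tk := by
    rw [Real.norm_eq_abs, abs_of_pos (by linarith)]
  have hkey : ξ ≤ Ψ * (tk1 - tk) := by
    rw [← habs]; linarith
  constructor
  · rw [ge_iff_le, div_le_iff₀ hΨ]; linarith [hkey, mul_comm Ψ (tk1 - tk)]
  · exact div_pos hξ hΨ
end

section
/- Let z ∈ ℝ², ς̄ > ς > 0, ε₁, ε₂ > 0, θ ∈ [-1,1], and let ε* be the constant satisfying ε* = e^{-(ε*+1)}. Then z₁·(-θς - ς̄·tanh(ς̄z₁/ε₁)) + z₂·(-θς - ς̄·tanh(ς̄z₂/ε₂)) ≤ ε*·(ε₁ + ε₂). -/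
lemma key_exp (εs : ℝ) (h : εs = Real.exp (-(εs + 1))) (s : ℝ) :
    s ≤ εs * (Real.exp s + 1) := by
  have h1 := Real.add_one_le_exp (s - (εs + 1))
  have h2 : Real.exp (s - (εs + 1)) = εs * Real.exp s := by
    nth_rewrite 2 [h]
    rw [← Real.exp_add]
    congr 1
    ring
  nlinarith [h1, h2]

lemma key_tanh (x ε εs : ℝ) (hε : 0 < ε) (h : εs = Real.exp (-(εs + 1))) :
    |x| - x * Real.tanh (x / ε) ≤ εs * ε := by
  have hεs : 0 < εs := h ▸ Real.exp_pos _
  -- reduce to x ≥ 0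
  suffices H : ∀ y : ℝ, 0 ≤ y → y - y * Real.tanh (y / ε) ≤ εs * ε by
    rcases le_or_gt 0 x with hx | hx
    · simpa [abs_of_nonneg hx] using H x hx
    · have := H (-x) (by linarith)
      rw [neg_div, Real.tanh_neg] at this
      simp only [abs_of_neg hx]
      nlinarith [this]
  intro y hy
  set t := y / ε with ht
  have hyt : y = t * ε := by rw [ht, div_mul_cancel₀ y hε.ne']
  have hcosh : 0 < Real.cosh t := Real.cosh_pos t
  have htanh : Real.tanh t = Real.sinh t / Real.cosh t := Real.tanh_eq_sinh_div_cosh t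
  have hcs : Real.cosh t - Real.sinh t = Real.exp (-t) := Real.cosh_sub_sinh t
  have hch : Real.cosh t = (Real.exp t + Real.exp (-t)) / 2 := Real.cosh_eq t
  have hkey := key_exp εs h (2 * t)
  have he2 : Real.exp (2 * t) = Real.exp t * Real.exp t := by
    rw [two_mul, Real.exp_add]
  have hepos : 0 < Real.exp t := Real.exp_pos t
  have hepos' : 0 < Real.exp (-t) := Real.exp_pos (-t)
  have hmul : Real.exp t * Real.exp (-t) = 1 := by
    rw [← Real.exp_add]; simp
  have ht0 : 0 ≤ t := div_nonneg hy hε.le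
  -- goal: y - y * tanh t ≤ εs * ε
  rw [htanh, hyt]
  have goal' : t * ε * Real.cosh t - t * ε * Real.sinh t ≤ εs * ε * Real.cosh t := by
    have h1 : t * (Real.cosh t - Real.sinh t) = t * Real.exp (-t) := by rw [hcs]
    have h2 : 2 * t ≤ εs * (Real.exp t * Real.exp t + 1) := by rw [← he2]; exact hkey
    have h3 := mul_le_mul_of_nonneg_left h2 (mul_pos hepos' hε).le
    have h4 : Real.exp t * Real.exp t * Real.exp (-t) = Real.exp t := by
      rw [mul_assoc, mul_comm (Real.exp t) (Real.exp (-t)), ← mul_assoc, hmul, one_mul]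
    have h5 : Real.exp (-t) * ε * (εs * (Real.exp t * Real.exp t + 1)) =
        εs * ε * (2 * Real.cosh t) := by
      rw [hch]; linear_combination ε * εs * h4
    have h6 : t * ε * Real.cosh t - t * ε * Real.sinh t = Real.exp (-t) * ε * t := by
      linear_combination ε * h1
    linarith [h3, h5, h6, mul_pos hcosh (mul_pos hεs hε)]
  calc t * ε - t * ε * (Real.sinh t / Real.cosh t)
      = (t * ε * Real.cosh t - t * ε * Real.sinh t) / Real.cosh t := by
        field_simp
    _ ≤ εs * ε := by
        rw [div_le_iff₀ hcosh]; linarith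

theorem stmt_13 (z₁ z₂ ς ςbar ε₁ ε₂ θ εs : ℝ)
    (hς : 0 < ς) (hςbar : ς < ςbar) (hε₁ : 0 < ε₁) (hε₂ : 0 < ε₂)
    (hθ : θ ∈ Set.Icc (-1 : ℝ) 1)
    (hεs : εs = Real.exp (-(εs + 1))) :
    z₁ * (-(θ * ς) - ςbar * Real.tanh (ςbar * z₁ / ε₁)) +
      z₂ * (-(θ * ς) - ςbar * Real.tanh (ςbar * z₂ / ε₂)) ≤ εs * (ε₁ + ε₂) := by
  obtain ⟨hθ1, hθ2⟩ := hθ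
  have term : ∀ z ε : ℝ, 0 < ε →
      z * (-(θ * ς) - ςbar * Real.tanh (ςbar * z / ε)) ≤ εs * ε := by
    intro z ε hε
    have hk := key_tanh (ςbar * z) ε εs hε hεs
    have habs : z * (-(θ * ς)) ≤ |ςbar * z| := by
      rw [abs_mul, abs_of_pos (lt_trans hς hςbar)]
      rcases le_or_gt 0 z with hz | hz
      · rw [abs_of_nonneg hz]
        nlinarith [mul_nonneg hz (show (0:ℝ) ≤ ςbar + θ * ς by nlinarith)]
      · rw [abs_of_neg hz]
        nlinarith [mul_pos (neg_pos.2 hz) (show (0:ℝ) < ςbar - θ * ς by nlinarith)]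
    nlinarith [hk, habs]
  have := term z₁ ε₁ hε₁
  have := term z₂ ε₂ hε₂
  linarith
end
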